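/- Let f : (C^n,0) → (C^p,0) be a holomorphic map germ and let α be a p × n matrix of germs with f(x) - f(x') = α(x,x')·(x - x'). Then at any point (a,b) with a ≠ b, every n × n minor of α lies in the ideal generated by the components f_j(x) - f_j(x'), j = 1,…,p, in the local ring at (a,b). -/

import Mathlib

open Filter Topology

private lemma analyticAt_det' {E : Type*} [NormedAddCommGroup E] [NormedSpace ℂ E]
    {m : ℕ} {M : E → Matrix (Fin m) (Fin m) ℂ} {c : E}
    (h : ∀ i j, AnalyticAt ℂ (fun w => M w i j) c) :
    AnalyticAt ℂ (fun w => (M w).det) c := by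
  simp only [Matrix.det_apply']
  exact Finset.analyticAt_fun_sum _ fun σ _ =>
    (analyticAt_const.mul (Finset.analyticAt_fun_prod _ fun i _ => h (σ i) i))

/-- Let `f : (ℂⁿ,0) → (ℂᵖ,0)` be holomorphic, `p ≥ n`, and `α` a `p × n` matrix of germs
with `f(x) - f(x') = α(x,x')·(x - x')`. Then at any point `(a,b)` with `a ≠ b`, every
`n × n` minor of `α` lies in the ideal generated by the components `fⱼ(x) - fⱼ(x')` in
the local ring of holomorphic germs at `(a,b)`: it is a combination of them with
holomorphic coefficients, on a neighbourhood of `(a,b)`. -/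
theorem minors_mem_pullback_ideal_off_diagonal (n p : ℕ) (hnp : n ≤ p)
    (f : (Fin n → ℂ) → (Fin p → ℂ))
    (α : Fin p → Fin n → ((Fin n → ℂ) × (Fin n → ℂ)) → ℂ)
    (a b : Fin n → ℂ) (hab : a ≠ b)
    (hf : AnalyticAt ℂ f a) (hf' : AnalyticAt ℂ f b)
    (hα : ∀ j i, AnalyticAt ℂ (α j i) (a, b))
    (hrel : ∀ᶠ w : (Fin n → ℂ) × (Fin n → ℂ) in nhds (a, b),
      ∀ j, f w.1 j - f w.2 j = ∑ i, α j i w * (w.1 i - w.2 i)) :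
    ∀ rows : Fin n → Fin p, StrictMono rows →
      ∃ g : Fin p → ((Fin n → ℂ) × (Fin n → ℂ)) → ℂ,
        (∀ j, AnalyticAt ℂ (g j) (a, b)) ∧
        ∀ᶠ w : (Fin n → ℂ) × (Fin n → ℂ) in nhds (a, b),
          (Matrix.of fun i i' : Fin n => α (rows i) i' w).det
            = ∑ j, g j w * (f w.1 j - f w.2 j) := by
  intro rows hrows
  -- pick a coordinate where a and b differ
  obtain ⟨i₀, hi₀⟩ : ∃ i, a i ≠ b i := by
    by_contra h
    push_neg at h
    exact hab (funext h)
  set M : ((Fin n → ℂ) × (Fin n → ℂ)) → Matrix (Fin n) (Fin n) ℂ :=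
    fun w => Matrix.of fun i i' : Fin n => α (rows i) i' w with hM
  set d : ((Fin n → ℂ) × (Fin n → ℂ)) → ℂ := fun w => w.1 i₀ - w.2 i₀ with hd
  have hdA : AnalyticAt ℂ d (a, b) := by
    apply AnalyticAt.sub
    · exact (analyticAt_pi_iff.mp analyticAt_fst) i₀
    · exact (analyticAt_pi_iff.mp analyticAt_snd) i₀
  have hd0 : d (a, b) ≠ 0 := sub_ne_zero.mpr hi₀
  -- adjugate entries are analytic
  have hadj : ∀ i : Fin n, AnalyticAt ℂ (fun w => (M w).adjugate i₀ i) (a, b) := by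
    intro i
    simp only [Matrix.adjugate_apply]
    apply analyticAt_det' (M := fun w => (M w).updateRow i (Pi.single i₀ 1))
    intro k l
    by_cases hk : k = i
    · subst hk; simp only [Matrix.updateRow_self]; exact analyticAt_const
    · simp only [Matrix.updateRow_ne hk]
      exact hα (rows k) l
  refine ⟨fun j w => (∑ i, if rows i = j then (M w).adjugate i₀ i else 0) / d w, ?_, ?_⟩
  · intro j
    apply AnalyticAt.div _ hdA hd0
    apply Finset.analyticAt_fun_sum
    intro i _
    by_cases h : rows i = j
    · simp only [h, if_true]; exact hadj i
    · simp only [h, if_false]; exact analyticAt_const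
  · have hdev : ∀ᶠ w : (Fin n → ℂ) × (Fin n → ℂ) in nhds (a, b), d w ≠ 0 :=
      hdA.continuousAt.eventually_ne hd0
    filter_upwards [hrel, hdev] with w hw hdw
    have hinj : Function.Injective rows := hrows.injective
    -- key Cramer computation
    have key : ∑ i, (M w).adjugate i₀ i * (f w.1 (rows i) - f w.2 (rows i))
        = (M w).det * d w := by
      have hv : ∀ i : Fin n, f w.1 (rows i) - f w.2 (rows i)
          = ((M w).mulVec (fun i' => w.1 i' - w.2 i')) i := by
        intro i
        rw [hw (rows i)]
        simp [Matrix.mulVec, dotProduct, M]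
      calc ∑ i, (M w).adjugate i₀ i * (f w.1 (rows i) - f w.2 (rows i))
          = ((M w).adjugate.mulVec ((M w).mulVec fun i' => w.1 i' - w.2 i')) i₀ := by
            simp only [Matrix.mulVec, dotProduct]
            refine Finset.sum_congr rfl fun i _ => ?_
            rw [hv i]
            simp [Matrix.mulVec, dotProduct]
        _ = (((M w).adjugate * (M w)).mulVec fun i' => w.1 i' - w.2 i') i₀ := by
            rw [Matrix.mulVec_mulVec]
        _ = (M w).det * d w := by
            rw [Matrix.adjugate_mul]
            simp [Matrix.smul_mulVec, Matrix.one_mulVec, d, mul_comm]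
    calc (Matrix.of fun i i' : Fin n => α (rows i) i' w).det
        = (M w).det := rfl
      _ = ∑ j, (∑ i, if rows i = j then (M w).adjugate i₀ i else 0) / d w
            * (f w.1 j - f w.2 j) := by
          rw [eq_comm]
          have : ∀ j, (∑ i, if rows i = j then (M w).adjugate i₀ i else 0) / d w
              * (f w.1 j - f w.2 j)
              = ∑ i, (if rows i = j then (M w).adjugate i₀ i * (f w.1 j - f w.2 j) else 0)
                / d w := by
            intro j
            rw [div_mul_eq_mul_div, Finset.sum_mul, Finset.sum_div]
            refine Finset.sum_congr rfl fun i _ => ?_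
            split <;> simp
          simp_rw [this]
          rw [Finset.sum_comm]
          have : ∀ i : Fin n,
              (∑ j, (if rows i = j then (M w).adjugate i₀ i * (f w.1 j - f w.2 j) else 0) / d w)
              = (M w).adjugate i₀ i * (f w.1 (rows i) - f w.2 (rows i)) / d w := by
            intro i
            rw [← Finset.sum_div, Finset.sum_ite_eq (Finset.univ) (rows i)]
            simp
          simp_rw [this, ← Finset.sum_div, key]
          field_simp
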